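/- Let α ≥ ω₁ be a regular cardinal and 0 < n < ω. Then every subspace T of C⁻(α,n) such that ∞ ∈ T and ∞ lies in the closure of T \ {∞} is homeomorphic to C⁻(α,n). -/

import Mathlib

universe u v

/-- `CIdx K m` represents the set `αⁿ` for `n = m+1`, where `K` plays the role of `α`. -/
def CIdx (K : Type u) : ℕ → Type u
  | 0 => K
  | m + 1 => K × CIdx K m

/-- Given a subset `U` of `(α × αⁿ) ∪ {∞}` and `ξ`, the set `{x ∈ αⁿ : (ξ,x) ∈ U} ∪ {∞}`. -/
def cslice {K J : Type u} (U : Set (Option (K × J))) (ξ : K) : Set (Option J) :=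
  insert none (Option.some '' {x : J | Option.some (ξ, x) ∈ U})

/-- The openness predicate of the space `C⁻(α, m+1)`. -/
def CIsOpen (K : Type u) : (m : ℕ) → Set (Option (CIdx K m)) → Prop
  | 0, U => none ∈ U → Cardinal.mk ((Option.some ⁻¹' U)ᶜ : Set K) < Cardinal.mk K
  | m + 1, U => none ∈ U →
      Cardinal.mk (({ξ : K | CIsOpen K m (cslice U ξ)}ᶜ : Set K)) < Cardinal.mk K

theorem cslice_mono {K J : Type u} {U V : Set (Option (K × J))} (h : U ⊆ V) (ξ : K) :
    cslice U ξ ⊆ cslice V ξ := by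
  intro z hz
  rcases hz with hz | hz
  · exact Or.inl hz
  · rcases hz with ⟨x, hx, rfl⟩
    exact Or.inr ⟨x, h hx, rfl⟩

theorem none_mem_cslice {K J : Type u} (U : Set (Option (K × J))) (ξ : K) :
    none ∈ cslice U ξ := Set.mem_insert _ _

theorem cisOpen_of_none_not_mem (K : Type u) (m : ℕ) (U : Set (Option (CIdx K m)))
    (h : none ∉ U) : CIsOpen K m U := by
  cases m with
  | zero => exact fun hU => absurd hU h
  | succ m => exact fun hU => absurd hU h

theorem cisOpen_mono (K : Type u) (m : ℕ) :
    ∀ U V : Set (Option (CIdx K m)), CIsOpen K m U → U ⊆ V → (none ∈ V → none ∈ U) →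
      CIsOpen K m V := by
  induction m with
  | zero =>
    intro U V hU hUV hnone hV
    refine lt_of_le_of_lt (Cardinal.mk_le_mk_of_subset ?_) (hU (hnone hV))
    intro k hk hU'
    exact hk (hUV hU')
  | succ m ih =>
    intro U V hU hUV hnone hV
    refine lt_of_le_of_lt (Cardinal.mk_le_mk_of_subset ?_) (hU (hnone hV))
    intro ξ hξ hopen
    exact hξ (ih _ _ hopen (cslice_mono hUV ξ) (fun _ => none_mem_cslice U ξ))

theorem cslice_univ {K J : Type u} (ξ : K) :
    cslice (Set.univ : Set (Option (K × J))) ξ = Set.univ := by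
  ext z
  cases z with
  | none => simp [cslice]
  | some j => simp [cslice]

theorem cisOpen_univ (K : Type u) [Nonempty K] (m : ℕ) : CIsOpen K m Set.univ := by
  cases m with
  | zero =>
    intro _
    show Cardinal.mk ((Option.some ⁻¹' (Set.univ : Set (Option K)))ᶜ : Set K) < Cardinal.mk K
    simp only [Set.preimage_univ, Set.compl_univ, Cardinal.mk_emptyCollection]
    exact Cardinal.mk_ne_zero K |>.bot_lt
  | succ m =>
    intro _
    have h : ({ξ : K | CIsOpen K m (cslice (Set.univ : Set (Option (CIdx K (m+1)))) ξ)}ᶜ : Set K)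
        = ∅ := by
      ext ξ
      simp only [Set.mem_compl_iff, Set.mem_setOf_eq, Set.mem_empty_iff_false, iff_false, not_not]
      exact cast (congrArg (CIsOpen K m) (cslice_univ (K := K) (J := CIdx K m) ξ).symm)
        (cisOpen_univ K m)
    rw [h, Cardinal.mk_emptyCollection]
    exact Cardinal.mk_ne_zero K |>.bot_lt

theorem some_mem_cslice_iff {K J : Type u} (U : Set (Option (K × J))) (ξ : K) (x : J) :
    some x ∈ cslice U ξ ↔ some (ξ, x) ∈ U := by
  simp [cslice]

theorem cslice_inter {K J : Type u} (U V : Set (Option (K × J))) (ξ : K) :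
    cslice (U ∩ V) ξ = cslice U ξ ∩ cslice V ξ := by
  ext z
  cases z with
  | none => simp [none_mem_cslice]
  | some x => simp [some_mem_cslice_iff]

theorem cisOpen_inter (K : Type u) [Infinite K] (m : ℕ) :
    ∀ U V : Set (Option (CIdx K m)), CIsOpen K m U → CIsOpen K m V →
      CIsOpen K m (U ∩ V) := by
  induction m with
  | zero =>
    intro U V hU hV h
    have hsub : ((Option.some ⁻¹' (U ∩ V))ᶜ : Set K) ⊆
        (Option.some ⁻¹' U)ᶜ ∪ (Option.some ⁻¹' V)ᶜ := by
      intro k hk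
      by_contra hc
      exact hk ⟨Classical.byContradiction fun h' => hc (Or.inl h'),
        Classical.byContradiction fun h' => hc (Or.inr h')⟩
    refine lt_of_le_of_lt (Cardinal.mk_le_mk_of_subset hsub) ?_
    refine lt_of_le_of_lt (Cardinal.mk_union_le _ _) ?_
    exact Cardinal.add_lt_of_lt (Cardinal.aleph0_le_mk K) (hU h.1) (hV h.2)
  | succ m ih =>
    intro U V hU hV h
    have hsub : ({ξ : K | CIsOpen K m (cslice (U ∩ V) ξ)}ᶜ : Set K) ⊆
        {ξ : K | CIsOpen K m (cslice U ξ)}ᶜ ∪ {ξ : K | CIsOpen K m (cslice V ξ)}ᶜ := by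
      intro ξ hξ
      by_contra hc
      have hU' : CIsOpen K m (cslice U ξ) := Classical.byContradiction fun h' => hc (Or.inl h')
      have hV' : CIsOpen K m (cslice V ξ) := Classical.byContradiction fun h' => hc (Or.inr h')
      exact hξ (cast (congrArg (CIsOpen K m) (cslice_inter (J := CIdx K m) U V ξ).symm)
        (ih _ _ hU' hV'))
    refine lt_of_le_of_lt (Cardinal.mk_le_mk_of_subset hsub) ?_
    refine lt_of_le_of_lt (Cardinal.mk_union_le _ _) ?_
    exact Cardinal.add_lt_of_lt (Cardinal.aleph0_le_mk K) (hU h.1) (hV h.2)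

theorem cisOpen_sUnion (K : Type u) (m : ℕ) (S : Set (Set (Option (CIdx K m))))
    (hS : ∀ U ∈ S, CIsOpen K m U) : CIsOpen K m (⋃₀ S) := by
  by_cases h : none ∈ ⋃₀ S
  · obtain ⟨U, hUS, hU⟩ := h
    exact cisOpen_mono K m U _ (hS U hUS) (Set.subset_sUnion_of_mem hUS) (fun _ => hU)
  · exact cisOpen_of_none_not_mem _ _ _ h

/-- The space `C⁻(α, m+1)` from the paper (so `m = 0` gives `C(α)` itself);
`K` plays the role of the set of ordinals `< α` and `none` plays the role of `∞`. -/
def CTop (K : Type u) [Infinite K] (m : ℕ) : TopologicalSpace (Option (CIdx K m)) where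
  IsOpen := CIsOpen K m
  isOpen_univ := cisOpen_univ K m
  isOpen_inter := cisOpen_inter K m
  isOpen_sUnion := cisOpen_sUnion K m

instance instCTop (K : Type u) [Infinite K] (m : ℕ) : TopologicalSpace (Option (CIdx K m)) :=
  CTop K m

namespace Stmt11Aux

open Cardinal

universe w

/-- slice of a subset of a product -/
def sl {K : Type u} {J : Type u} (A : Set (K × J)) (ξ : K) : Set J := {x | (ξ, x) ∈ A}

/-- The filter (as a membership predicate) of neighborhoods of `∞` in `C⁻(α,m+1)`,
restricted to `αⁿ`. -/
def Fmem (K : Type u) : (m : ℕ) → Set (CIdx K m) → Prop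
  | 0, A => Cardinal.mk ↥(Aᶜ) < Cardinal.mk K
  | m+1, A => Cardinal.mk ↥{ξ : K | ¬ Fmem K m (sl A ξ)} < Cardinal.mk K

theorem fmem_zero {K : Type u} (A : Set (CIdx K 0)) :
    Fmem K 0 A ↔ Cardinal.mk ↥(Aᶜ) < Cardinal.mk K := Iff.rfl

theorem fmem_succ {K : Type u} (m : ℕ) (A : Set (CIdx K (m+1))) :
    Fmem K (m+1) A ↔ Cardinal.mk ↥{ξ : K | ¬ Fmem K m (sl A ξ)} < Cardinal.mk K := Iff.rfl

theorem fmem_mono {K : Type u} : ∀ (m : ℕ) (A B : Set (CIdx K m)),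
    Fmem K m A → A ⊆ B → Fmem K m B := by
  intro m
  induction m with
  | zero =>
    intro A B hA hAB
    exact lt_of_le_of_lt (Cardinal.mk_le_mk_of_subset (Set.compl_subset_compl.2 hAB)) hA
  | succ m ih =>
    intro A B hA hAB
    refine lt_of_le_of_lt (Cardinal.mk_le_mk_of_subset ?_) hA
    intro ξ hξ hA'
    exact hξ (ih _ _ hA' (fun x hx => hAB hx))

theorem fmem_univ (K : Type u) [Infinite K] : ∀ (m : ℕ), Fmem K m Set.univ := by
  intro m
  induction m with
  | zero =>
    show Cardinal.mk ↥((Set.univ : Set K)ᶜ) < Cardinal.mk K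
    simp only [Set.compl_univ, Cardinal.mk_emptyCollection]
    exact lt_of_lt_of_le Cardinal.aleph0_pos (Cardinal.aleph0_le_mk K)
  | succ m ih =>
    show Cardinal.mk ↥{ξ : K | ¬ Fmem K m (sl Set.univ ξ)} < Cardinal.mk K
    have h : {ξ : K | ¬ Fmem K m (sl Set.univ ξ)} = ∅ := by
      ext ξ
      simp only [Set.mem_setOf_eq, Set.mem_empty_iff_false, iff_false, not_not]
      have : sl (Set.univ : Set (K × CIdx K m)) ξ = Set.univ := rfl
      rw [this]; exact ih
    rw [h, Cardinal.mk_emptyCollection]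
    exact lt_of_lt_of_le Cardinal.aleph0_pos (Cardinal.aleph0_le_mk K)

theorem fmem_inter {K : Type u} [Infinite K] : ∀ (m : ℕ) (A B : Set (CIdx K m)),
    Fmem K m A → Fmem K m B → Fmem K m (A ∩ B) := by
  intro m
  induction m with
  | zero =>
    intro A B hA hB
    show Cardinal.mk ↥((A ∩ B)ᶜ) < Cardinal.mk K
    rw [Set.compl_inter]
    refine lt_of_le_of_lt (Cardinal.mk_union_le _ _) ?_
    exact Cardinal.add_lt_of_lt (Cardinal.aleph0_le_mk K) hA hB
  | succ m ih =>
    intro A B hA hB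
    show Cardinal.mk ↥{ξ : K | ¬ Fmem K m (sl (A ∩ B) ξ)} < Cardinal.mk K
    have hsub : {ξ : K | ¬ Fmem K m (sl (A ∩ B) ξ)} ⊆
        {ξ : K | ¬ Fmem K m (sl A ξ)} ∪ {ξ : K | ¬ Fmem K m (sl B ξ)} := by
      intro ξ hξ
      by_contra hc
      simp only [Set.mem_union, Set.mem_setOf_eq, not_or, not_not] at hc
      simp only [Set.mem_setOf_eq] at hξ
      apply hξ
      have : sl (A ∩ B) ξ = sl A ξ ∩ sl B ξ := rfl
      rw [this]
      exact ih _ _ hc.1 hc.2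
    refine lt_of_le_of_lt (Cardinal.mk_le_mk_of_subset hsub) ?_
    refine lt_of_le_of_lt (Cardinal.mk_union_le _ _) ?_
    exact Cardinal.add_lt_of_lt (Cardinal.aleph0_le_mk K) hA hB

theorem mk_cIdx (K : Type u) [Infinite K] : ∀ (m : ℕ), Cardinal.mk (CIdx K m) = Cardinal.mk K := by
  intro m
  induction m with
  | zero => rfl
  | succ m ih =>
    show Cardinal.mk (K × CIdx K m) = Cardinal.mk K
    rw [Cardinal.mk_prod, Cardinal.lift_id, Cardinal.lift_id, ih,
      Cardinal.mul_eq_self (Cardinal.aleph0_le_mk K)]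

theorem fmem_compl_of_small {K : Type u} [Infinite K] : ∀ (m : ℕ) (A : Set (CIdx K m)),
    Cardinal.mk ↥A < Cardinal.mk K → Fmem K m Aᶜ := by
  intro m
  induction m with
  | zero =>
    intro A hA
    show Cardinal.mk ↥(Aᶜᶜ) < Cardinal.mk K
    rwa [compl_compl]
  | succ m ih =>
    intro A hA
    show Cardinal.mk ↥{ξ : K | ¬ Fmem K m (sl Aᶜ ξ)} < Cardinal.mk K
    have h : {ξ : K | ¬ Fmem K m (sl Aᶜ ξ)} = ∅ := by
      ext ξ
      simp only [Set.mem_setOf_eq, Set.mem_empty_iff_false, iff_false, not_not]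
      have hslc : sl Aᶜ ξ = (sl A ξ)ᶜ := rfl
      rw [hslc]
      apply ih
      refine lt_of_le_of_lt (Cardinal.mk_le_of_injective (f := fun x : ↥(sl A ξ) =>
        (⟨(ξ, (x : CIdx K m)), x.2⟩ : ↥A)) ?_) hA
      intro x y hxy
      apply Subtype.ext
      have := congrArg Subtype.val hxy
      exact (Prod.mk.injEq _ _ _ _ ▸ this).2
    rw [h, Cardinal.mk_emptyCollection]
    exact lt_of_lt_of_le Cardinal.aleph0_pos (Cardinal.aleph0_le_mk K)

/-- positivity with respect to the filter -/
def Pos (K : Type u) (m : ℕ) (S : Set (CIdx K m)) : Prop :=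
  ∀ G : Set (CIdx K m), Fmem K m G → (S ∩ G).Nonempty

theorem pos_card {K : Type u} [Infinite K] (m : ℕ) (S : Set (CIdx K m)) (hS : Pos K m S) :
    Cardinal.mk ↥S = Cardinal.mk K := by
  have hle : Cardinal.mk ↥S ≤ Cardinal.mk K := le_of_le_of_eq (Cardinal.mk_set_le S) (mk_cIdx K m)
  rcases lt_or_eq_of_le hle with hlt | heq
  · exfalso
    obtain ⟨x, hxS, hxC⟩ := hS Sᶜ (fmem_compl_of_small m S hlt)
    exact hxC hxS
  · exact heq

end Stmt11Aux
namespace Stmt11Aux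

/-- `e` carries the trace of the filter on `S` to the filter itself. -/
def Carries {K : Type u} (m : ℕ) (S : Set (CIdx K m)) (e : ↥S ≃ CIdx K m) : Prop :=
  ∀ A : Set (CIdx K m),
    (∃ G, Fmem K m G ∧ ∀ x : ↥S, (x : CIdx K m) ∈ G → e x ∈ A) ↔ Fmem K m A

theorem carries_zero {K : Type u} [Infinite K] (S : Set (CIdx K 0)) (hS : Pos K 0 S) :
    ∃ e : ↥S ≃ CIdx K 0, Carries 0 S e := by
  have hcard : Cardinal.mk ↥S = Cardinal.mk (CIdx K 0) := (pos_card 0 S hS).trans (mk_cIdx K 0).symm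
  obtain ⟨e⟩ := Cardinal.eq.mp hcard
  refine ⟨e, fun A => ⟨?_, ?_⟩⟩
  · rintro ⟨G, hG, hGA⟩
    show Cardinal.mk ↥(Aᶜ) < Cardinal.mk K
    have hsub : Aᶜ ⊆ (fun x : ↥S => e x) '' {x : ↥S | (x : CIdx K 0) ∉ G} := by
      intro a ha
      refine ⟨e.symm a, ?_, e.apply_symm_apply a⟩
      intro hg
      have := hGA (e.symm a) hg
      rw [e.apply_symm_apply] at this
      exact ha this
    refine lt_of_le_of_lt (Cardinal.mk_le_mk_of_subset hsub) ?_
    refine lt_of_le_of_lt (Cardinal.mk_image_le) ?_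
    refine lt_of_le_of_lt (Cardinal.mk_le_of_injective
      (f := fun x : ↥{x : ↥S | (x : CIdx K 0) ∉ G} => (⟨x.1.1, x.2⟩ : ↥(Gᶜ))) ?_) hG
    intro x y hxy
    simp only [Subtype.mk.injEq] at hxy
    exact Subtype.ext (Subtype.ext hxy)
  · intro hA
    refine ⟨(Subtype.val '' {x : ↥S | e x ∉ A})ᶜ, ?_, ?_⟩
    · apply fmem_compl_of_small
      refine lt_of_le_of_lt (Cardinal.mk_image_le) ?_
      refine lt_of_le_of_lt (Cardinal.mk_le_of_injective (f := fun x : ↥{x : ↥S | e x ∉ A} =>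
        (⟨e x.1, x.2⟩ : ↥(Aᶜ))) ?_) hA
      intro x y hxy
      exact Subtype.ext (e.injective (congrArg Subtype.val hxy))
    · intro x hx
      by_contra hc
      exact hx ⟨x, hc, rfl⟩

end Stmt11Aux
namespace Stmt11Aux

open scoped Classical

/-- Transfer `Carries` along a bijection that is the identity off two null sets. -/
theorem carries_of_fix {K : Type u} [Infinite K] (m : ℕ) {S' S : Set (CIdx K m)}
    (hsub : S' ⊆ S) (hD : Fmem K m ((S \ S')ᶜ)) {N : Set (CIdx K m)}
    (hN : Fmem K m Nᶜ) (β : ↥S ≃ ↥S')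
    (hβ : ∀ x : ↥S, (x : CIdx K m) ∈ S' \ N → ((β x : ↥S') : CIdx K m) = x)
    {e' : ↥S' ≃ CIdx K m} (he' : Carries m S' e') :
    Carries m S (β.trans e') := by
  intro A
  constructor
  · rintro ⟨G, hG, hGA⟩
    rw [← he' A]
    refine ⟨G ∩ ((S \ S')ᶜ ∩ Nᶜ), fmem_inter m _ _ hG (fmem_inter m _ _ hD hN), ?_⟩
    rintro x ⟨hxG, hxD, hxN⟩
    have hxS : (x : CIdx K m) ∈ S := hsub x.2
    have hx' : (x : CIdx K m) ∈ S' \ N := ⟨x.2, hxN⟩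
    have hβx : ((β ⟨x, hxS⟩ : ↥S') : CIdx K m) = ((⟨x, hxS⟩ : ↥S) : CIdx K m) :=
      hβ ⟨x, hxS⟩ hx'
    have heq : β ⟨x, hxS⟩ = x := Subtype.ext hβx
    have h3 := hGA ⟨x, hxS⟩ hxG
    simp only [Equiv.trans_apply] at h3
    rwa [heq] at h3
  · intro hA
    obtain ⟨G, hG, hGA⟩ := (he' A).mpr hA
    refine ⟨G ∩ ((S \ S')ᶜ ∩ Nᶜ), fmem_inter m _ _ hG (fmem_inter m _ _ hD hN), ?_⟩
    rintro x ⟨hxG, hxD, hxN⟩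
    have hxS' : (x : CIdx K m) ∈ S' := by
      by_contra hc
      exact hxD ⟨x.2, hc⟩
    have hβx : ((β x : ↥S') : CIdx K m) = (x : CIdx K m) := hβ x ⟨hxS', hxN⟩
    simp only [Equiv.trans_apply]
    have heq : β x = ⟨(x : CIdx K m), hxS'⟩ := Subtype.ext hβx
    rw [heq]
    exact hGA _ hxG

/-- Construct the bijection `β : S ≃ S'` fixing `S' \ N`. -/
noncomputable def swapEquiv {α : Type u} {S' S N : Set α} (hsub : S' ⊆ S) (hNsub : N ⊆ S')
    (γ : ↥(N ∪ (S \ S')) ≃ ↥N) : ↥S ≃ ↥S' where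
  toFun x := if h : (x : α) ∈ S' ∧ (x : α) ∉ N then ⟨x, h.1⟩
    else ⟨(γ ⟨x, by
      rcases Classical.em ((x : α) ∈ N) with hN | hN
      · exact Or.inl hN
      · exact Or.inr ⟨x.2, fun hS' => h ⟨hS', hN⟩⟩⟩ : ↥N), hNsub (γ _).2⟩
  invFun y := if h : (y : α) ∈ N then
    ⟨(γ.symm ⟨y, h⟩ : ↥(N ∪ (S \ S'))), by
      rcases (γ.symm ⟨(y : α), h⟩).2 with hN | hD
      · exact hsub (hNsub hN)
      · exact hD.1⟩
    else ⟨y, hsub y.2⟩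
  left_inv x := by
    by_cases h : (x : α) ∈ S' ∧ (x : α) ∉ N
    · simp only [dif_pos h]
      rw [dif_neg h.2]
    · have hmem : (x : α) ∈ N ∪ (S \ S') := by
        rcases Classical.em ((x : α) ∈ N) with hN | hN
        · exact Or.inl hN
        · exact Or.inr ⟨x.2, fun hS' => h ⟨hS', hN⟩⟩
      simp only [dif_neg h]
      have hval : ((γ ⟨x, hmem⟩ : ↥N) : α) ∈ N := (γ ⟨x, hmem⟩).2
      rw [dif_pos hval]
      apply Subtype.ext
      show ((γ.symm ⟨((γ ⟨x, hmem⟩ : ↥N) : α), hval⟩ : ↥(N ∪ (S \ S'))) : α) = (x : α)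
      have h1 : (⟨((γ ⟨x, hmem⟩ : ↥N) : α), hval⟩ : ↥N) = γ ⟨x, hmem⟩ := rfl
      rw [h1, Equiv.symm_apply_apply]
  right_inv y := by
    by_cases h : (y : α) ∈ N
    · simp only [dif_pos h]
      have hmem2 : ¬ (((γ.symm ⟨(y : α), h⟩ : ↥(N ∪ (S \ S'))) : α) ∈ S' ∧
          ((γ.symm ⟨(y : α), h⟩ : ↥(N ∪ (S \ S'))) : α) ∉ N) := by
        rcases (γ.symm ⟨(y : α), h⟩).2 with hN | hD
        · exact fun hc => hc.2 hN
        · exact fun hc => hD.2 hc.1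
      rw [dif_neg hmem2]
      apply Subtype.ext
      show ((γ ⟨((γ.symm ⟨(y : α), h⟩ : ↥(N ∪ (S \ S'))) : α), _⟩ : ↥N) : α) = (y : α)
      have h1 : (⟨((γ.symm ⟨(y : α), h⟩ : ↥(N ∪ (S \ S'))) : α), _⟩ : ↥(N ∪ (S \ S')))
          = γ.symm ⟨(y : α), h⟩ := rfl
      rw [h1, Equiv.apply_symm_apply]
    · simp only [dif_neg h]
      rw [dif_pos ⟨y.2, h⟩]

theorem swapEquiv_fix {α : Type u} {S' S N : Set α} (hsub : S' ⊆ S) (hNsub : N ⊆ S')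
    (γ : ↥(N ∪ (S \ S')) ≃ ↥N) (x : ↥S) (hx : (x : α) ∈ S' \ N) :
    ((swapEquiv hsub hNsub γ x : ↥S') : α) = (x : α) := by
  show ((dite _ _ _ : ↥S') : α) = (x : α)
  rw [dif_pos ⟨hx.1, hx.2⟩]

end Stmt11Aux
namespace Stmt11Aux

theorem carries_extend {K : Type u} [Infinite K] (m : ℕ) {S' S : Set (CIdx K m)}
    (hsub : S' ⊆ S) (hD : Fmem K m ((S \ S')ᶜ)) {N : Set (CIdx K m)}
    (hNsub : N ⊆ S') (hN : Fmem K m Nᶜ) (hNcard : Cardinal.mk ↥N = Cardinal.mk K)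
    {e' : ↥S' ≃ CIdx K m} (he' : Carries m S' e') :
    ∃ e : ↥S ≃ CIdx K m, Carries m S e := by
  have hcard : Cardinal.mk ↥(N ∪ (S \ S')) = Cardinal.mk ↥N := by
    apply le_antisymm
    · exact le_of_le_of_eq (le_of_le_of_eq (Cardinal.mk_set_le _) (mk_cIdx K m)) hNcard.symm
    · exact Cardinal.mk_le_mk_of_subset Set.subset_union_left
  obtain ⟨γ⟩ := Cardinal.eq.mp hcard
  exact ⟨(swapEquiv hsub hNsub γ).trans e',
    carries_of_fix m hsub hD hN _ (swapEquiv_fix hsub hNsub γ) he'⟩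

/-- Assembling the slice bijections into one bijection. -/
noncomputable def phiEquiv {K J L : Type u} (S : Set (K × J)) (P : Set K)
    (ψ : ↥P ≃ K) (e : ∀ ξ : ↥P, ↥(sl S ↑ξ) ≃ L) :
    ↥{p : K × J | p ∈ S ∧ p.1 ∈ P} ≃ K × L where
  toFun q := (ψ ⟨q.1.1, q.2.2⟩, e ⟨q.1.1, q.2.2⟩ ⟨q.1.2, q.2.1⟩)
  invFun r := ⟨((ψ.symm r.1 : K), ((e (ψ.symm r.1)).symm r.2 : J)),
    ⟨((e (ψ.symm r.1)).symm r.2).2, (ψ.symm r.1).2⟩⟩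
  left_inv q := by
    apply Subtype.ext
    show ((ψ.symm (ψ ⟨q.1.1, q.2.2⟩) : K),
      ((e (ψ.symm (ψ ⟨q.1.1, q.2.2⟩))).symm (e ⟨q.1.1, q.2.2⟩ ⟨q.1.2, q.2.1⟩) : J)) = q.1
    rw [ψ.symm_apply_apply]
    rw [Equiv.symm_apply_apply]
  right_inv r := by
    show (ψ (ψ.symm r.1), (e (ψ.symm r.1) ((e (ψ.symm r.1)).symm r.2) : L)) = r
    rw [Equiv.apply_symm_apply, Equiv.apply_symm_apply]

theorem carries_succ {K : Type u} [Infinite K] (m : ℕ)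
    (IH : ∀ S : Set (CIdx K m), Pos K m S → ∃ e : ↥S ≃ CIdx K m, Carries m S e)
    (S : Set (CIdx K (m+1))) (hS : Pos K (m+1) S) :
    ∃ e : ↥S ≃ CIdx K (m+1), Carries (m+1) S e := by
  classical
  set P : Set K := {ξ : K | Pos K m (sl S ξ)} with hPdef
  -- choice of witnesses for non-positive slices
  have hch : ∀ ζ : K, ∃ G : Set (CIdx K m), Fmem K m G ∧ (ζ ∉ P → sl S ζ ∩ G = ∅) := by
    intro ζ
    by_cases h : ζ ∈ P
    · exact ⟨Set.univ, fmem_univ K m, fun hc => absurd h hc⟩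
    · have h' : ¬ Pos K m (sl S ζ) := h
      obtain ⟨G, hG⟩ := not_forall.mp h'
      rw [Classical.not_imp] at hG
      exact ⟨G, hG.1, fun _ => Set.not_nonempty_iff_eq_empty.mp hG.2⟩
  choose H hH1 hH2 using hch
  -- P has full cardinality
  have hPcard : Cardinal.mk ↥P = Cardinal.mk K := by
    have hle : Cardinal.mk ↥P ≤ Cardinal.mk K := Cardinal.mk_set_le P
    rcases lt_or_eq_of_le hle with hlt | heq
    · exfalso
      have hG : Fmem K (m+1) {p : K × CIdx K m | p.1 ∉ P ∧ p.2 ∈ H p.1} := by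
        rw [fmem_succ]
        refine lt_of_le_of_lt (Cardinal.mk_le_mk_of_subset (t := P) ?_) hlt
        intro ξ hξ
        by_contra hc
        apply hξ
        have hsl : sl {p : K × CIdx K m | p.1 ∉ P ∧ p.2 ∈ H p.1} ξ = H ξ := by
          ext x
          simp only [sl, Set.mem_setOf_eq]
          exact ⟨fun h => h.2, fun h => ⟨hc, h⟩⟩
        exact (congrArg (Fmem K m) hsl).mpr (hH1 ξ)
      obtain ⟨p, hpS, hp1, hp2⟩ := hS _ hG
      have : (p.2 : CIdx K m) ∈ sl S p.1 ∩ H p.1 := ⟨hpS, hp2⟩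
      rw [hH2 p.1 hp1] at this
      exact this
    · exact heq
  obtain ⟨ψ⟩ := Cardinal.eq.mp hPcard
  -- slice bijections
  choose e he using fun ξ : ↥P => IH (sl S ↑ξ) ξ.2
  set S' : Set (CIdx K (m+1)) := {p : K × CIdx K m | p ∈ S ∧ p.1 ∈ P} with hS'def
  have hsub : S' ⊆ S := fun p hp => hp.1
  set φ : ↥S' ≃ CIdx K (m+1) := phiEquiv S P ψ e with hφdef
  -- φ carries the filter
  have hφ : Carries (m+1) S' φ := by
    intro A
    constructor
    · rintro ⟨G, hG, hGA⟩
      rw [fmem_succ]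
      have claim : ∀ ξ : ↥P, Fmem K m (sl G ↑ξ) → Fmem K m (sl A (ψ ξ)) := by
        intro ξ hξ
        apply (he ξ (sl A (ψ ξ))).mp
        refine ⟨sl G ↑ξ, hξ, ?_⟩
        intro x hx
        exact hGA ⟨((ξ : K), (x : CIdx K m)), ⟨x.2, ξ.2⟩⟩ hx
      rw [fmem_succ] at hG
      refine lt_of_le_of_lt (Cardinal.mk_le_of_injective
        (f := fun η : ↥{η : K | ¬ Fmem K m (sl A η)} =>
          (⟨(ψ.symm ↑η : K), by
            intro hc
            have h2 := claim (ψ.symm ↑η) hc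
            rw [ψ.apply_symm_apply] at h2
            exact η.2 h2⟩ : ↥{ζ : K | ¬ Fmem K m (sl G ζ)})) ?_) hG
      intro a b hab
      simp only [Subtype.mk.injEq] at hab
      exact Subtype.ext (ψ.symm.injective (Subtype.ext hab))
    · intro hA
      have hch2 : ∀ ζ : K, ∃ Gz : Set (CIdx K m),
          (∀ h : ζ ∈ P, Fmem K m (sl A (ψ ⟨ζ, h⟩)) → (Fmem K m Gz ∧
            ∀ x : ↥(sl S ζ), (x : CIdx K m) ∈ Gz → e ⟨ζ, h⟩ x ∈ sl A (ψ ⟨ζ, h⟩))) ∧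
          (ζ ∉ P → Fmem K m Gz ∧ sl S ζ ∩ Gz = ∅) ∧
          ((∃ h : ζ ∈ P, ¬ Fmem K m (sl A (ψ ⟨ζ, h⟩))) → Gz = ∅) := by
        intro ζ
        by_cases h : ζ ∈ P
        · by_cases hF : Fmem K m (sl A (ψ ⟨ζ, h⟩))
          · obtain ⟨Gz, hGz, hall⟩ := (he ⟨ζ, h⟩ (sl A (ψ ⟨ζ, h⟩))).mpr hF
            exact ⟨Gz, fun h' _ => ⟨hGz, hall⟩, fun hc => absurd h hc,
              fun ⟨h', hc⟩ => absurd hF hc⟩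
          · exact ⟨∅, fun h' hF' => absurd hF' hF, fun hc => absurd h hc, fun _ => rfl⟩
        · exact ⟨H ζ, fun h' => absurd h' h, fun _ => ⟨hH1 ζ, hH2 ζ h⟩,
            fun ⟨h', _⟩ => absurd h' h⟩
      choose GG hg1 hg2 hg3 using hch2
      have hbad : ∀ ζ : ↥{ζ : K | ¬ Fmem K m (sl {p : K × CIdx K m | p.2 ∈ GG p.1} ζ)},
          ∃ h : (ζ : K) ∈ P, ¬ Fmem K m (sl A (ψ ⟨(ζ : K), h⟩)) := by
        intro ζ
        have hζ : ¬ Fmem K m (GG (ζ : K)) := ζ.2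
        by_cases h : (ζ : K) ∈ P
        · exact ⟨h, fun hF => hζ (hg1 _ h hF).1⟩
        · exact absurd (hg2 _ h).1 hζ
      refine ⟨{p : K × CIdx K m | p.2 ∈ GG p.1}, ?_, ?_⟩
      · rw [fmem_succ]
        rw [fmem_succ] at hA
        refine lt_of_le_of_lt (Cardinal.mk_le_of_injective
          (f := fun ζ : ↥{ζ : K | ¬ Fmem K m (sl {p : K × CIdx K m | p.2 ∈ GG p.1} ζ)} =>
            (⟨ψ ⟨(ζ : K), (hbad ζ).choose⟩, (hbad ζ).choose_spec⟩ :
              ↥{η : K | ¬ Fmem K m (sl A η)})) ?_) hA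
        intro a b hab
        simp only [Subtype.mk.injEq] at hab
        have h4 := ψ.injective hab
        simp only [Subtype.mk.injEq] at h4
        exact Subtype.ext h4
      · rintro ⟨⟨ζ, x⟩, hqS, hqP⟩ hg
        by_cases hF : Fmem K m (sl A (ψ ⟨ζ, hqP⟩))
        · exact (hg1 ζ hqP hF).2 ⟨x, hqS⟩ hg
        · have hgg := hg3 ζ ⟨hqP, hF⟩
          have hg' : x ∈ GG ζ := hg
          rw [hgg] at hg'
          exact absurd hg' (Set.notMem_empty x)
  -- a null set of full cardinality inside S'
  have hPne : Nonempty ↥P := by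
    rw [← Cardinal.mk_ne_zero_iff, hPcard]
    exact Cardinal.mk_ne_zero K
  obtain ⟨ξ₀⟩ := hPne
  set N : Set (CIdx K (m+1)) := {p : K × CIdx K m | p ∈ S' ∧ p.1 = (ξ₀ : K)} with hNdef
  have hNsub : N ⊆ S' := fun p hp => hp.1
  have hNequiv : ↥N ≃ ↥(sl S (ξ₀ : K)) :=
    { toFun := fun p => ⟨p.1.2, by
        show ((ξ₀ : K), p.1.2) ∈ S
        rw [← p.2.2]
        exact p.2.1.1⟩
      invFun := fun x => ⟨((ξ₀ : K), (x : CIdx K m)), ⟨⟨x.2, ξ₀.2⟩, rfl⟩⟩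
      left_inv := fun p => by
        apply Subtype.ext
        show ((ξ₀ : K), p.1.2) = p.1
        rw [← p.2.2]
        rfl
      right_inv := fun x => rfl }
  have hNcard : Cardinal.mk ↥N = Cardinal.mk K :=
    (Cardinal.mk_congr hNequiv).trans (pos_card m _ ξ₀.2)
  have hNnull : Fmem K (m+1) Nᶜ := by
    rw [fmem_succ]
    have hsubN : {ζ : K | ¬ Fmem K m (sl Nᶜ ζ)} ⊆ {(ξ₀ : K)} := by
      intro ζ hζ
      by_contra hc
      apply hζ
      have hsl : sl Nᶜ ζ = Set.univ := by
        ext x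
        simp only [sl, Set.mem_compl_iff, Set.mem_setOf_eq, Set.mem_univ, iff_true, hNdef]
        intro hx
        exact hc hx.2
      rw [hsl]
      exact fmem_univ K m
    refine lt_of_le_of_lt (Cardinal.mk_le_mk_of_subset hsubN) ?_
    rw [Cardinal.mk_singleton]
    exact lt_of_lt_of_le Cardinal.one_lt_aleph0 (Cardinal.aleph0_le_mk K)
  have hD : Fmem K (m+1) ((S \ S')ᶜ) := by
    rw [fmem_succ]
    have hsubD : {ζ : K | ¬ Fmem K m (sl (S \ S')ᶜ ζ)} ⊆ ∅ := by
      intro ζ hζ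
      exfalso
      apply hζ
      by_cases h : ζ ∈ P
      · have hsl : sl (S \ S')ᶜ ζ = Set.univ := by
          ext x
          simp only [sl, Set.mem_compl_iff, Set.mem_diff, Set.mem_univ, iff_true, Set.mem_setOf_eq]
          intro hx
          exact hx.2 ⟨hx.1, h⟩
        rw [hsl]
        exact fmem_univ K m
      · refine fmem_mono m (H ζ) _ (hH1 ζ) ?_
        intro x hx hmem
        have : x ∈ sl S ζ ∩ H ζ := ⟨hmem.1, hx⟩
        rw [hH2 ζ h] at this
        exact this
    refine lt_of_le_of_lt (Cardinal.mk_le_mk_of_subset hsubD) ?_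
    rw [Cardinal.mk_emptyCollection]
    exact lt_of_lt_of_le Cardinal.aleph0_pos (Cardinal.aleph0_le_mk K)
  exact carries_extend (m+1) hsub hD hNsub hNnull hNcard hφ

theorem carries_main {K : Type u} [Infinite K] :
    ∀ (m : ℕ) (S : Set (CIdx K m)), Pos K m S → ∃ e : ↥S ≃ CIdx K m, Carries m S e := by
  intro m
  induction m with
  | zero => exact carries_zero
  | succ m ih => exact carries_succ m ih

end Stmt11Aux
namespace Stmt11Aux

theorem cisOpen_iff_fmem {K : Type u} : ∀ (m : ℕ) (U : Set (Option (CIdx K m))), none ∈ U →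
    (CIsOpen K m U ↔ Fmem K m {x : CIdx K m | some x ∈ U}) := by
  intro m
  induction m with
  | zero =>
    intro U h
    exact ⟨fun hop => hop h, fun hf _ => hf⟩
  | succ m ih =>
    intro U h
    have hset : {ξ : K | CIsOpen K m (cslice U ξ)}ᶜ
        = {ξ : K | ¬ Fmem K m (sl {p : K × CIdx K m | some p ∈ U} ξ)} := by
      ext ξ
      simp only [Set.mem_compl_iff, Set.mem_setOf_eq]
      have hiff := ih (cslice U ξ) (none_mem_cslice U ξ)
      have hseq : {x : CIdx K m | some x ∈ cslice U ξ}
          = sl {p : K × CIdx K m | some p ∈ U} ξ := by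
        ext x
        exact some_mem_cslice_iff U ξ x
      rw [hseq] at hiff
      exact not_congr hiff
    constructor
    · intro hop
      show Cardinal.mk ↥{ξ : K | ¬ Fmem K m (sl {p : K × CIdx K m | some p ∈ U} ξ)}
        < Cardinal.mk K
      rw [← hset]
      exact hop h
    · intro hf _
      show Cardinal.mk ↥({ξ : K | CIsOpen K m (cslice U ξ)}ᶜ) < Cardinal.mk K
      rw [hset]
      exact hf

theorem cisOpen_insert {K : Type u} (m : ℕ) (G : Set (CIdx K m)) (hG : Fmem K m G) :
    CIsOpen K m (insert none (Option.some '' G)) := by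
  rw [cisOpen_iff_fmem m _ (Set.mem_insert _ _)]
  have hset : {x : CIdx K m | some x ∈ insert none (Option.some '' G)} = G := by
    ext x
    simp only [Set.mem_setOf_eq, Set.mem_insert_iff, reduceCtorEq, false_or]
    constructor
    · rintro ⟨y, hy, hyx⟩
      rwa [← Option.some_injective _ hyx]
    · intro hx
      exact ⟨x, hx, rfl⟩
  rwa [hset]

theorem subtype_isOpen_of_none_not_mem {K : Type u} [Infinite K] {m : ℕ}
    {T : Set (Option (CIdx K m))} (U' : Set ↥T)
    (h : ∀ z : ↥T, z ∈ U' → (z : Option (CIdx K m)) ≠ none) : IsOpen U' := by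
  rw [isOpen_induced_iff]
  refine ⟨Subtype.val '' U', ?_, ?_⟩
  · apply cisOpen_of_none_not_mem
    rintro ⟨z, hz, hzeq⟩
    exact h z hz hzeq
  · exact Set.preimage_image_eq U' Subtype.coe_injective

theorem subtype_isOpen_of_nbhd {K : Type u} [Infinite K] {m : ℕ}
    {T : Set (Option (CIdx K m))} (U' : Set ↥T) (V : Set (Option (CIdx K m)))
    (hV : CIsOpen K m V) (hnV : none ∈ V) (hsub : Subtype.val ⁻¹' V ⊆ U') : IsOpen U' := by
  rw [isOpen_induced_iff]
  refine ⟨V ∪ Subtype.val '' U', ?_, ?_⟩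
  · exact cisOpen_mono K m V _ hV Set.subset_union_left (fun _ => hnV)
  · ext z
    simp only [Set.mem_preimage, Set.mem_union]
    constructor
    · rintro (hz | hz)
      · exact hsub hz
      · rcases hz with ⟨w, hw, hweq⟩
        rwa [← Subtype.coe_injective hweq]
    · intro hz
      exact Or.inr ⟨z, hz, rfl⟩

/-- The final bijection. -/
noncomputable def finalEquiv {K : Type u} {m : ℕ} (T : Set (Option (CIdx K m)))
    (h1 : none ∈ T) (e : ↥{x : CIdx K m | some x ∈ T} ≃ CIdx K m) :
    ↥T ≃ Option (CIdx K m) where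
  toFun z := match z with
    | ⟨none, _⟩ => none
    | ⟨some x, hx⟩ => some (e ⟨x, hx⟩)
  invFun o := match o with
    | none => ⟨none, h1⟩
    | some y => ⟨some ((e.symm y : ↥{x : CIdx K m | some x ∈ T}) : CIdx K m), (e.symm y).2⟩
  left_inv z := by
    match z with
    | ⟨none, hz⟩ => rfl
    | ⟨some x, hx⟩ =>
      apply Subtype.ext
      show some ((e.symm (e ⟨x, hx⟩) : ↥{x : CIdx K m | some x ∈ T}) : CIdx K m) = some x
      rw [e.symm_apply_apply]
  right_inv o := by
    match o with
    | none => rfl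
    | some y =>
      show some (e (e.symm y)) = some y
      rw [e.apply_symm_apply]

end Stmt11Aux
/-- for a regular cardinal `α ≥ ω₁` (the cardinality of `K`) and `0 < n < ω`,
every subspace `T` of `C⁻(α,n)` with `∞ ∈ T` and `∞ ∈ closure (T \ {∞})` is homeomorphic to
`C⁻(α,n)`.  Here `CTop K m` (the instance topology on `Option (CIdx K m)`) is `C⁻(α, m+1)`
and `none` is the point `∞`. -/
theorem stmt11 (K : Type u) [Infinite K] (hreg : (Cardinal.mk K).IsRegular)
    (hω1 : Cardinal.aleph 1 ≤ Cardinal.mk K) (m : ℕ)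
    (T : Set (Option (CIdx K m))) (h1 : none ∈ T) (h2 : none ∈ closure (T \ {none})) :
    Nonempty (T ≃ₜ Option (CIdx K m)) := by
  classical
  set S : Set (CIdx K m) := {x : CIdx K m | some x ∈ T} with hSdef
  have hPos : Stmt11Aux.Pos K m S := by
    intro G hG
    have hopen : IsOpen (insert none (Option.some '' G)) := Stmt11Aux.cisOpen_insert m G hG
    obtain ⟨z, hzU, hzT⟩ :=
      mem_closure_iff.mp h2 _ hopen (Set.mem_insert _ _)
    rcases hzU with hzn | ⟨x, hxG, rfl⟩
    · exact absurd hzn (fun h => hzT.2 (h ▸ rfl))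
    · exact ⟨x, hzT.1, hxG⟩
  obtain ⟨e, he⟩ := Stmt11Aux.carries_main m S hPos
  set q : ↥T ≃ Option (CIdx K m) := Stmt11Aux.finalEquiv T h1 e with hqdef
  have hq_some : ∀ (x : CIdx K m) (hx : some x ∈ T), q ⟨some x, hx⟩ = some (e ⟨x, hx⟩) :=
    fun x hx => rfl
  have hq_none : q ⟨none, h1⟩ = none := rfl
  have hqs_none : q.symm none = ⟨none, h1⟩ := rfl
  have hqs_some : ∀ y : CIdx K m, q.symm (some y) =
      ⟨some ((e.symm y : ↥S) : CIdx K m), (e.symm y).2⟩ := fun y => rfl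
  refine ⟨⟨q, ?_, ?_⟩⟩
  · -- continuity of q
    rw [continuous_def]
    intro U hU
    by_cases hnU : none ∈ U
    · have hA : Stmt11Aux.Fmem K m {x : CIdx K m | some x ∈ U} :=
        (Stmt11Aux.cisOpen_iff_fmem m U hnU).mp hU
      obtain ⟨G, hG, hGA⟩ := (he {x : CIdx K m | some x ∈ U}).mpr hA
      apply Stmt11Aux.subtype_isOpen_of_nbhd _ (insert none (Option.some '' G))
        (Stmt11Aux.cisOpen_insert m G hG) (Set.mem_insert _ _)
      intro z hz
      obtain ⟨zv, hzT⟩ := z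
      match zv, hzT, hz with
      | none, hzT, _ =>
        show q ⟨none, hzT⟩ ∈ U
        exact hnU
      | some x, hzT, hz =>
        rcases hz with hzn | ⟨w, hwG, hweq⟩
        · exact absurd hzn (by simp)
        · have hxw : w = x := Option.some_injective _ hweq
          subst hxw
          show q ⟨some w, hzT⟩ ∈ U
          rw [hq_some w hzT]
          exact hGA ⟨w, hzT⟩ hwG
    · apply Stmt11Aux.subtype_isOpen_of_none_not_mem
      intro z hz hzn
      obtain ⟨zv, hzT⟩ := z
      simp only at hzn
      subst hzn
      exact hnU hz
  · -- continuity of q.symm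
    rw [continuous_def]
    intro U' hU'
    obtain ⟨V, hV, hVeq⟩ := isOpen_induced_iff.mp hU'
    by_cases hn : (⟨none, h1⟩ : ↥T) ∈ U'
    · have hnV : none ∈ V := by
        rw [← hVeq] at hn
        exact hn
      have hnmem : none ∈ q.symm ⁻¹' U' := by
        show q.symm none ∈ U'
        rw [hqs_none]
        exact hn
      show IsOpen (q.symm ⁻¹' U')
      rw [show (IsOpen (q.symm ⁻¹' U')) = (CIsOpen K m (q.symm ⁻¹' U')) from rfl]
      rw [Stmt11Aux.cisOpen_iff_fmem m _ hnmem]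
      have hAV : Stmt11Aux.Fmem K m {y : CIdx K m | some y ∈ V} :=
        (Stmt11Aux.cisOpen_iff_fmem m V hnV).mp hV
      have hgoalset : {x : CIdx K m | some x ∈ q.symm ⁻¹' U'}
          = {x : CIdx K m | ((e.symm x : ↥S) : CIdx K m) ∈ {y : CIdx K m | some y ∈ V}} := by
        ext x
        simp only [Set.mem_setOf_eq, Set.mem_preimage]
        rw [hqs_some x, ← hVeq]
        exact Iff.rfl
      rw [hgoalset]
      apply (he _).mp
      refine ⟨{y : CIdx K m | some y ∈ V}, hAV, ?_⟩
      intro w hw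
      show ((e.symm (e w) : ↥S) : CIdx K m) ∈ {y : CIdx K m | some y ∈ V}
      rw [e.symm_apply_apply]
      exact hw
    · apply cisOpen_of_none_not_mem
      intro hmem
      apply hn
      have : q.symm none ∈ U' := hmem
      rwa [hqs_none] at this
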